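/- Let μ be the semicircle distribution on ℝ and let α ∈ (0,1). Then A_α = (−2√α, 2√α); moreover, for every c ∈ (−2√α, 2√α), setting w_{α,c} := ((1−α)c + i(1−α)√(4α − c²))/(2α), one has {w ∈ ℂ ∖ ℝ : w·G_μ(w + c) = 1 − α} = {w_{α,c}, conj(w_{α,c})}, Im(w_{α,c}) > 0, and −((1−α)/π)·Im(1/w_{α,c}) = (1/(2π))·√(4α − c²) = √α·ρ_sc(c/√α). -/

import Mathlib

open MeasureTheory Complex

/-- The Cauchy (Stieltjes) transform of a measure on `ℝ`. -/
noncomputable def cauchyT (μ : Measure ℝ) (w : ℂ) : ℂ := ∫ t : ℝ, (w - (t : ℂ))⁻¹ ∂μ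

/-- Density of the standard semicircle distribution. -/
noncomputable def rhoSC (x : ℝ) : ℝ :=
  if |x| ≤ 2 then Real.sqrt (4 - x ^ 2) / (2 * Real.pi) else 0

/-- The standard semicircle distribution on `ℝ`. -/
noncomputable def semicircle : Measure ℝ :=
  volume.withDensity (fun x => ENNReal.ofReal (rhoSC x))

open intervalIntegral Metric

lemma rhoSC_nonneg (x : ℝ) : 0 ≤ rhoSC x := by
  unfold rhoSC; split
  · positivity
  · exact le_refl 0

lemma rhoSC_eq_zero {x : ℝ} (hx : ¬ |x| ≤ 2) : rhoSC x = 0 := by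
  unfold rhoSC; rw [if_neg hx]

lemma rhoSC_le_one (x : ℝ) : rhoSC x ≤ 1 := by
  unfold rhoSC; split
  · rename_i h
    have h2 : Real.sqrt (4 - x ^ 2) ≤ 2 := by
      rw [show (2:ℝ) = Real.sqrt 4 by rw [show (4:ℝ) = 2^2 by norm_num, Real.sqrt_sq]; norm_num]
      apply Real.sqrt_le_sqrt; nlinarith [sq_nonneg x]
    have hπ : (2:ℝ) ≤ 2 * Real.pi := by nlinarith [Real.pi_gt_three]
    calc Real.sqrt (4 - x ^ 2) / (2 * Real.pi) ≤ 2 / 2 :=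
          div_le_div₀ (by norm_num) h2 (by norm_num) hπ
      _ = 1 := by norm_num
  · norm_num

lemma measurable_rhoSC : Measurable rhoSC := by
  unfold rhoSC
  apply Measurable.ite
  · exact measurableSet_le (by fun_prop) measurable_const
  · fun_prop
  · fun_prop

instance : IsFiniteMeasure semicircle := by
  constructor
  rw [semicircle, withDensity_apply _ MeasurableSet.univ, Measure.restrict_univ]
  calc ∫⁻ x, ENNReal.ofReal (rhoSC x) ≤ ∫⁻ x, (Set.Icc (-2:ℝ) 2).indicator (fun _ => 1) x := by
        apply lintegral_mono
        intro x
        simp only []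
        by_cases hx : |x| ≤ 2
        · rw [Set.indicator_of_mem (by simpa [Set.mem_Icc] using abs_le.mp hx : x ∈ Set.Icc (-2:ℝ) 2)]
          exact ENNReal.ofReal_le_one.mpr (rhoSC_le_one x)
        · rw [rhoSC_eq_zero hx]; simp
    _ < ⊤ := by
        rw [lintegral_indicator measurableSet_Icc]
        simp [Real.volume_Icc]

open intervalIntegral

lemma rhoSC_eq (x : ℝ) : rhoSC x = Real.sqrt (4 - x ^ 2) / (2 * Real.pi) := by
  unfold rhoSC; split
  · rfl
  · rename_i h
    rw [show Real.sqrt (4 - x ^ 2) = 0 from Real.sqrt_eq_zero'.mpr (by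
      nlinarith [_root_.sq_abs x, lt_of_not_ge h]), zero_div]

lemma continuous_rhoSC : Continuous rhoSC := by
  have : rhoSC = fun x => Real.sqrt (4 - x ^ 2) / (2 * Real.pi) := funext rhoSC_eq
  rw [this]; fun_prop

lemma semicircle_integral (g : ℝ → ℂ) :
    ∫ t, g t ∂semicircle = ∫ t in (-2:ℝ)..2, rhoSC t • g t := by
  have h1 : semicircle
      = volume.withDensity (fun x => ((Real.toNNReal (rhoSC x) : NNReal) : ENNReal)) := rfl
  rw [h1, integral_withDensity_eq_integral_smul (measurable_rhoSC.real_toNNReal) g]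
  have h2 : ∀ t : ℝ, (Real.toNNReal (rhoSC t) : NNReal) • g t = rhoSC t • g t := by
    intro t
    rw [NNReal.smul_def, Real.coe_toNNReal _ (rhoSC_nonneg t)]
  simp_rw [h2]
  rw [intervalIntegral.integral_of_le (by norm_num : (-2:ℝ) ≤ 2)]
  rw [setIntegral_eq_integral_of_forall_compl_eq_zero]
  intro x hx
  simp only [Set.mem_Ioc, not_and_or, not_le, not_lt] at hx
  rw [rhoSC_eq, show Real.sqrt (4 - x ^ 2) = 0 from Real.sqrt_eq_zero'.mpr (by
    rcases hx with h | h <;> nlinarith), zero_div, zero_smul]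

lemma norm_inv_sub_le {z : ℂ} (hz : z.im ≠ 0) (t : ℝ) :
    ‖(z - (t:ℂ))⁻¹‖ ≤ |z.im|⁻¹ := by
  rw [norm_inv]
  apply inv_anti₀ (abs_pos.mpr hz)
  calc |z.im| = |(z - (t:ℂ)).im| := by simp
    _ ≤ ‖z - (t:ℂ)‖ := Complex.abs_im_le_norm _

lemma integrable_inv_sub {z : ℂ} (hz : z.im ≠ 0) :
    Integrable (fun t : ℝ => (z - (t:ℂ))⁻¹) semicircle := by
  apply (integrable_const (|z.im|⁻¹)).mono'
  · exact (Measurable.inv (by fun_prop)).aestronglyMeasurable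
  · filter_upwards with t
    exact norm_inv_sub_le hz t

lemma cauchyT_conj (z : ℂ) :
    cauchyT semicircle ((starRingEnd ℂ) z) = (starRingEnd ℂ) (cauchyT semicircle z) := by
  unfold cauchyT
  rw [← integral_conj]
  congr 1
  funext t
  rw [map_inv₀, map_sub, Complex.conj_ofReal]

lemma cauchyT_im_nonpos {z : ℂ} (hz : 0 < z.im) : (cauchyT semicircle z).im ≤ 0 := by
  unfold cauchyT
  rw [show (∫ t : ℝ, (z - (t:ℂ))⁻¹ ∂semicircle).im
      = ∫ t : ℝ, ((z - (t:ℂ))⁻¹).im ∂semicircle from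
    (Complex.imCLM.integral_comp_comm (integrable_inv_sub (ne_of_gt hz))).symm]
  apply integral_nonpos
  intro t
  simp only [Pi.zero_apply]
  rw [Complex.inv_im]
  apply div_nonpos_of_nonpos_of_nonneg
  · simp [hz.le]
  · exact Complex.normSq_nonneg _

lemma alg1 {x y q s : ℝ} (hq0 : 0 < q) (hq : q^2 = x^2+y^2) :
    s*y^2/(2*q^3) = (s * (2*q) - s*x*(2*(x/q)))/(2*q)^2 := by
  have hy2 : y^2 = q^2 - x^2 := by linarith
  rw [hy2]; field_simp

lemma algb {x y q s : ℝ} (hy : 0 < y) (hq0 : 0 < q) (hq : q^2 = x^2+y^2)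
    (hs : s^2 = y^2+4) (hx4 : x^2 < 4) : (s*x/(2*q))^2 < 1 := by
  rw [div_pow, div_lt_one (by positivity), mul_pow, mul_pow, hs, hq]
  nlinarith [mul_pos (pow_pos hy 2) (show (0:ℝ) < 4 - x^2 by linarith)]

lemma alg2 {x y q r s : ℝ} (hq0 : 0 < q) (hq : q^2 = x^2+y^2)
    (hr : r^2 = 4-x^2) (hs : s^2 = y^2+4) :
    1 - (s*x/(2*q))^2 = (y*r/(2*q))^2 := by
  have e1 : (s*x/(2*q))^2 = s^2*x^2/(2^2*q^2) := by rw [div_pow, mul_pow, mul_pow]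
  have e2 : (y*r/(2*q))^2 = y^2*r^2/(2^2*q^2) := by rw [div_pow, mul_pow, mul_pow]
  have hq2 : (0:ℝ) < 2^2*q^2 := by positivity
  rw [e1, e2, eq_div_iff (ne_of_gt hq2), sub_mul, div_mul_cancel₀ _ (ne_of_gt hq2), hs, hr, hq]
  ring

lemma alg3 {x y q r s : ℝ} (hy : 0 < y) (hq0 : 0 < q) (hr0 : 0 < r) (hs0 : 0 < s)
    (hq : q^2 = x^2+y^2) (hr : r^2 = 4-x^2) (hs : s^2 = y^2+4) :
    r/(x^2+y^2) = (s/y) * (1/(y*r/(2*q)) * (s*y^2/(2*q^3))) - 1/(r/2)*(1/2) := by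
  have h1 : (s/y) * (1/(y*r/(2*q)) * (s*y^2/(2*q^3))) = s^2/(r*q^2) := by
    field_simp
  rw [h1, show x^2+y^2 = q^2 from hq.symm, hs, show y^2 = q^2 - x^2 by linarith,
    show (4:ℝ) = r^2 + x^2 by linarith]
  field_simp; ring

set_option maxHeartbeats 1000000 in
lemma integral_J {y : ℝ} (hy : 0 < y) :
    ∫ t in (-2:ℝ)..2, Real.sqrt (4 - t^2) / (t^2 + y^2)
      = Real.pi * (Real.sqrt (y^2+4) - y) / y := by
  have hpos : ∀ t : ℝ, (0:ℝ) < t^2 + y^2 :=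
    fun t => add_pos_of_nonneg_of_pos (sq_nonneg t) (pow_pos hy 2)
  have hsqp : ∀ t : ℝ, (0:ℝ) < Real.sqrt (t^2+y^2) := fun t => Real.sqrt_pos.mpr (hpos t)
  have hs : (Real.sqrt (y^2+4))^2 = y^2+4 := Real.sq_sqrt (by positivity)
  have hs0 : 0 < Real.sqrt (y^2+4) := Real.sqrt_pos.mpr (by positivity)
  have hcont' : Continuous (fun t : ℝ => Real.sqrt (4 - t^2) / (t^2+y^2)) :=
    Continuous.div (by fun_prop) (by fun_prop) (fun t => ne_of_gt (hpos t))
  have key := intervalIntegral.integral_eq_sub_of_hasDeriv_right_of_le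
    (f := fun t : ℝ => (Real.sqrt (y^2+4)/y)
        * Real.arcsin (Real.sqrt (y^2+4) * t / (2 * Real.sqrt (t^2+y^2)))
      - Real.arcsin (t/2))
    (f' := fun t => Real.sqrt (4 - t^2) / (t^2 + y^2))
    (by norm_num : (-2:ℝ) ≤ 2)
    (by
      apply Continuous.continuousOn
      apply Continuous.sub
      · apply Continuous.mul continuous_const
        apply Real.continuous_arcsin.comp
        exact Continuous.div (by fun_prop) (by fun_prop) fun t => by
          have := hsqp t; positivity
      · exact Real.continuous_arcsin.comp (by fun_prop))
    ?deriv
    (hcont'.intervalIntegrable _ _)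
  case deriv =>
    intro x hx
    simp only [Set.mem_Ioo] at hx
    have hq : (Real.sqrt (x^2+y^2))^2 = x^2+y^2 := Real.sq_sqrt (hpos x).le
    have hq0 : 0 < Real.sqrt (x^2+y^2) := hsqp x
    have hx4 : x^2 < 4 := by nlinarith [hx.1, hx.2]
    have hr : (Real.sqrt (4-x^2))^2 = 4-x^2 := Real.sq_sqrt (by nlinarith)
    have hr0 : 0 < Real.sqrt (4-x^2) := Real.sqrt_pos.mpr (by nlinarith)
    have hqd : HasDerivAt (fun t : ℝ => Real.sqrt (t^2+y^2)) (x/Real.sqrt (x^2+y^2)) x := by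
      have h1 : HasDerivAt (fun t : ℝ => t^2+y^2) (2*x) x := by
        simpa using (hasDerivAt_pow 2 x).add_const (y^2)
      have h2 := (Real.hasDerivAt_sqrt (ne_of_gt (hpos x))).comp x h1
      refine h2.congr_deriv (Eq.symm ?_)
      field_simp
    have hgd : HasDerivAt (fun t : ℝ => Real.sqrt (y^2+4) * t / (2 * Real.sqrt (t^2+y^2)))
        (Real.sqrt (y^2+4)*y^2/(2*(Real.sqrt (x^2+y^2))^3)) x := by
      have hnum : HasDerivAt (fun t : ℝ => Real.sqrt (y^2+4) * t) (Real.sqrt (y^2+4)) x := by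
        simpa using (hasDerivAt_id x).const_mul (Real.sqrt (y^2+4))
      have hden : HasDerivAt (fun t : ℝ => 2 * Real.sqrt (t^2+y^2))
          (2*(x/Real.sqrt (x^2+y^2))) x := hqd.const_mul 2
      have h3 := hnum.div hden (by positivity)
      refine h3.congr_deriv (Eq.symm ?_)
      exact alg1 hq0 hq
    have hb : (Real.sqrt (y^2+4)*x/(2*Real.sqrt (x^2+y^2)))^2 < 1 := algb hy hq0 hq hs hx4
    have h1 : Real.sqrt (y^2+4)*x/(2*Real.sqrt (x^2+y^2)) ≠ -1 := by
      intro h; rw [h] at hb; norm_num at hb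
    have h2 : Real.sqrt (y^2+4)*x/(2*Real.sqrt (x^2+y^2)) ≠ 1 := by
      intro h; rw [h] at hb; norm_num at hb
    have harc : HasDerivAt
        (fun t : ℝ => Real.arcsin (Real.sqrt (y^2+4) * t / (2 * Real.sqrt (t^2+y^2))))
        (1/Real.sqrt (1 - (Real.sqrt (y^2+4)*x/(2*Real.sqrt (x^2+y^2)))^2)
          * (Real.sqrt (y^2+4)*y^2/(2*(Real.sqrt (x^2+y^2))^3))) x :=
      by exact (Real.hasDerivAt_arcsin h1 h2).comp x hgd
    have hsqrt1 : Real.sqrt (1 - (Real.sqrt (y^2+4)*x/(2*Real.sqrt (x^2+y^2)))^2)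
        = y*Real.sqrt (4-x^2)/(2*Real.sqrt (x^2+y^2)) := by
      rw [alg2 hq0 hq hr hs]
      exact Real.sqrt_sq (by positivity)
    have hx1 : x/2 ≠ -1 := by
      intro h
      have : x = -2 := by linarith [(div_eq_iff (two_ne_zero (α := ℝ))).mp h]
      nlinarith [hx.1]
    have hx2 : x/2 ≠ 1 := by
      intro h
      have : x = 2 := by linarith [(div_eq_iff (two_ne_zero (α := ℝ))).mp h]
      nlinarith [hx.2]
    have harc2 : HasDerivAt (fun t : ℝ => Real.arcsin (t/2))
        (1/Real.sqrt (1 - (x/2)^2) * (1/2)) x :=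
      by exact (Real.hasDerivAt_arcsin hx1 hx2).comp x ((hasDerivAt_id x).div_const 2)
    have hsqrt2 : Real.sqrt (1 - (x/2)^2) = Real.sqrt (4-x^2)/2 := by
      rw [show 1 - (x/2)^2 = (Real.sqrt (4-x^2)/2)^2 by
        rw [div_pow, div_pow, hr]; ring]
      exact Real.sqrt_sq (by positivity)
    have hFd := (harc.const_mul (Real.sqrt (y^2+4)/y)).sub harc2
    have hfinal : HasDerivAt (fun t : ℝ => (Real.sqrt (y^2+4)/y)
        * Real.arcsin (Real.sqrt (y^2+4) * t / (2 * Real.sqrt (t^2+y^2)))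
        - Real.arcsin (t/2)) (Real.sqrt (4 - x^2) / (x^2 + y^2)) x := by
      refine hFd.congr_deriv (Eq.symm ?_)
      rw [hsqrt1, hsqrt2]
      exact alg3 hy hq0 hr0 hs0 hq hr hs
    exact hfinal.hasDerivWithinAt
  rw [key]
  rw [show ((2:ℝ))^2 + y^2 = y^2+4 by ring, show ((-2:ℝ))^2 + y^2 = y^2+4 by ring]
  rw [show Real.sqrt (y^2+4) * 2 / (2 * Real.sqrt (y^2+4)) = 1 by field_simp [mul_comm]]
  rw [show Real.sqrt (y^2+4) * (-2) / (2 * Real.sqrt (y^2+4)) = -1 by field_simp]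
  rw [show (2:ℝ)/2 = 1 by norm_num, show (-2:ℝ)/2 = -1 by norm_num]
  rw [Real.arcsin_one, Real.arcsin_neg_one]
  field_simp
  ring

lemma integral_odd_part {y : ℝ} (hy : 0 < y) :
    ∫ t in (-2:ℝ)..2, -(t * rhoSC t)/(t^2+y^2) = 0 := by
  have hodd : ∀ t : ℝ, -((-t) * rhoSC (-t))/((-t)^2+y^2) = -(-(t * rhoSC t)/(t^2+y^2)) := by
    intro t
    rw [rhoSC_eq, rhoSC_eq]
    ring_nf
  have h := intervalIntegral.integral_comp_neg (a := (-2:ℝ)) (b := 2)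
    (fun t => -(t * rhoSC t)/(t^2+y^2))
  simp only [neg_neg, show -(-2:ℝ) = 2 by norm_num] at h
  -- h : ∫ x in -2..2, f (-x) = ∫ x in -2..2, f x
  have h2 : (∫ t in (-2:ℝ)..2, -((-t) * rhoSC (-t))/((-t)^2+y^2))
      = ∫ t in (-2:ℝ)..2, -(-(t * rhoSC t)/(t^2+y^2)) := intervalIntegral.integral_congr
    (fun t _ => hodd t)
  rw [intervalIntegral.integral_neg] at h2
  have h3 : (∫ t in (-2:ℝ)..2, -((-t) * rhoSC (-t))/((-t)^2+y^2))
      = ∫ t in (-2:ℝ)..2, -(t * rhoSC t)/(t^2+y^2) := h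
  linarith [h2, h3]

lemma cauchyT_I_mul {y : ℝ} (hy : 0 < y) :
    cauchyT semicircle ((y:ℝ) * I) = (((y - Real.sqrt (y^2+4))/2 : ℝ) : ℂ) * I := by
  have hpos : ∀ t : ℝ, (0:ℝ) < t^2 + y^2 :=
    fun t => add_pos_of_nonneg_of_pos (sq_nonneg t) (pow_pos hy 2)
  have hpoint : ∀ t : ℝ, rhoSC t • (((y:ℝ):ℂ) * I - (t:ℂ))⁻¹
      = ((-(t * rhoSC t)/(t^2+y^2) : ℝ) : ℂ) + ((-(y * rhoSC t)/(t^2+y^2) : ℝ) : ℂ) * I := by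
    intro t
    have hinv : (((y:ℝ):ℂ) * I - (t:ℂ))⁻¹
        = ((-t/(t^2+y^2) : ℝ) : ℂ) + ((-y/(t^2+y^2) : ℝ) : ℂ) * I := by
      apply inv_eq_of_mul_eq_one_left
      have hne : (((t:ℝ)^2+y^2 : ℝ) : ℂ) ≠ 0 := by
        rw [Complex.ofReal_ne_zero]; exact ne_of_gt (hpos t)
      push_cast
      push_cast at hne
      field_simp
      linear_combination (-(y:ℂ)^2) * Complex.I_sq
    rw [hinv, Complex.real_smul]
    push_cast
    ring
  rw [cauchyT, semicircle_integral, intervalIntegral.integral_congr (fun t _ => hpoint t)]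
  have hf : IntervalIntegrable (fun t : ℝ => ((-(t * rhoSC t)/(t^2+y^2) : ℝ) : ℂ))
      volume (-2) 2 := by
    apply Continuous.intervalIntegrable
    apply Complex.continuous_ofReal.comp
    exact Continuous.div ((continuous_id.mul continuous_rhoSC).neg) (by fun_prop)
      (fun t => ne_of_gt (hpos t))
  have hg : IntervalIntegrable (fun t : ℝ => ((-(y * rhoSC t)/(t^2+y^2) : ℝ) : ℂ) * I)
      volume (-2) 2 := by
    apply Continuous.intervalIntegrable
    apply Continuous.mul _ continuous_const
    apply Complex.continuous_ofReal.comp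
    exact Continuous.div ((continuous_const.mul continuous_rhoSC).neg) (by fun_prop)
      (fun t => ne_of_gt (hpos t))
  rw [intervalIntegral.integral_add hf hg, intervalIntegral.integral_mul_const,
    intervalIntegral.integral_ofReal, intervalIntegral.integral_ofReal,
    integral_odd_part hy]
  have hgval : (∫ t in (-2:ℝ)..2, -(y * rhoSC t)/(t^2+y^2)) = (y - Real.sqrt (y^2+4))/2 := by
    have : ∀ t ∈ Set.uIcc (-2:ℝ) 2, -(y * rhoSC t)/(t^2+y^2)
        = (-(y/(2*Real.pi))) * (Real.sqrt (4 - t^2) / (t^2 + y^2)) := by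
      intro t _
      rw [rhoSC_eq]
      ring
    rw [intervalIntegral.integral_congr this, intervalIntegral.integral_const_mul,
      integral_J hy]
    have hπ : Real.pi ≠ 0 := Real.pi_ne_zero
    field_simp
    ring
  rw [hgval]
  simp

lemma im_bound_of_ball {z x : ℂ} (hz : z.im ≠ 0) (hx : x ∈ ball z (|z.im|/2)) :
    |z.im|/2 ≤ |x.im| := by
  have h1 : |x.im - z.im| ≤ ‖x - z‖ := by
    simpa using Complex.abs_im_le_norm (x - z)
  have h2 : ‖x - z‖ < |z.im|/2 := by
    rw [← dist_eq_norm]; exact mem_ball.mp hx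
  have := abs_sub_abs_le_abs_sub z.im x.im
  rw [abs_sub_comm] at this
  linarith [this, h1, h2]

lemma differentiableAt_cauchyT {z : ℂ} (hz : z.im ≠ 0) :
    DifferentiableAt ℂ (cauchyT semicircle) z := by
  have hε : 0 < |z.im|/2 := by
    have := abs_pos.mpr hz; linarith
  have key := hasDerivAt_integral_of_dominated_loc_of_deriv_le
    (μ := semicircle) (x₀ := z) (s := ball z (|z.im|/2))
    (F := fun (w : ℂ) (t : ℝ) => (w - (t:ℂ))⁻¹)
    (F' := fun (w : ℂ) (t : ℝ) => -(((w - (t:ℂ))^2)⁻¹))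
    (bound := fun _ => ((|z.im|/2)^2)⁻¹)
    (ball_mem_nhds z hε)
    (by
      filter_upwards with x
      exact (Measurable.inv (by fun_prop)).aestronglyMeasurable)
    (integrable_inv_sub hz)
    ((Measurable.neg (Measurable.inv (by fun_prop))).aestronglyMeasurable)
    (by
      filter_upwards with t x hx
      have hb := im_bound_of_ball hz hx
      have him : (x - (t:ℂ)).im = x.im := by simp
      have hnorm : |z.im|/2 ≤ ‖x - (t:ℂ)‖ := by
        calc |z.im|/2 ≤ |x.im| := hb
          _ = |(x - (t:ℂ)).im| := by rw [him]
          _ ≤ ‖x - (t:ℂ)‖ := Complex.abs_im_le_norm _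
      rw [norm_neg, norm_inv, norm_pow]
      apply inv_anti₀ (by positivity)
      exact pow_le_pow_left₀ (by positivity) hnorm 2)
    (integrable_const _)
    (by
      filter_upwards with t x hx
      have hb := im_bound_of_ball hz hx
      have hne : x - (t:ℂ) ≠ 0 := by
        intro h
        have : (x - (t:ℂ)).im = 0 := by rw [h]; simp
        simp only [Complex.sub_im, Complex.ofReal_im, sub_zero] at this
        rw [this] at hb
        simp at hb
        linarith [hb, hε]
      have := (hasDerivAt_inv hne).comp x ((hasDerivAt_id x).sub_const (t:ℂ))
      simp at this; exact this)
  exact key.2.differentiableAt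

lemma quad_pos {z : ℂ} (hz : 0 < z.im) :
    (cauchyT semicircle z)^2 - z * cauchyT semicircle z + 1 = 0 := by
  have hU : IsOpen {w : ℂ | 0 < w.im} := isOpen_lt continuous_const Complex.continuous_im
  have hdiff : DifferentiableOn ℂ
      (fun w => (cauchyT semicircle w)^2 - w * cauchyT semicircle w + 1) {w : ℂ | 0 < w.im} := by
    intro w hw
    have h := differentiableAt_cauchyT (ne_of_gt hw)
    exact (((h.pow 2).sub (differentiableAt_id.mul h)).add_const 1).differentiableWithinAt
  have hana := hdiff.analyticOnNhd hU
  have hconn : IsPreconnected {w : ℂ | 0 < w.im} := (convex_halfSpace_im_gt 0).isPreconnected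
  have hI : I ∈ {w : ℂ | 0 < w.im} := by simp
  have hval : ∀ y : ℝ, 0 < y →
      (cauchyT semicircle ((y:ℝ)*I))^2 - ((y:ℝ)*I) * cauchyT semicircle ((y:ℝ)*I) + 1 = 0 := by
    intro y hy
    rw [cauchyT_I_mul hy]
    have hs : (Real.sqrt (y^2+4))^2 = y^2+4 := Real.sq_sqrt (by positivity)
    have hsC : ((Real.sqrt (y^2+4) : ℝ) : ℂ)^2 = (y:ℂ)^2+4 := by
      rw [← Complex.ofReal_pow, hs]; push_cast; ring
    push_cast
    linear_combination (((y:ℂ) - (Real.sqrt (y^2+4) : ℝ))^2/4 - (y:ℂ)*((y:ℂ) - (Real.sqrt (y^2+4) : ℝ))/2) * Complex.I_sq - (1/4 : ℂ) * hsC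
  have hfreq : ∃ᶠ w in nhdsWithin I {I}ᶜ,
      (cauchyT semicircle w)^2 - w * cauchyT semicircle w + 1 = 0 := by
    have hmap : Filter.Tendsto (fun y : ℝ => (y:ℂ) * I)
        (nhdsWithin 1 {(1:ℝ)}ᶜ) (nhdsWithin I {I}ᶜ) := by
      rw [tendsto_nhdsWithin_iff]
      constructor
      · apply Filter.Tendsto.mono_left _ nhdsWithin_le_nhds
        have hcont : Continuous fun y : ℝ => (y:ℂ)*I := by fun_prop
        simpa using hcont.tendsto 1
      · filter_upwards [eventually_mem_nhdsWithin] with y hy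
        simp only [Set.mem_compl_iff, Set.mem_singleton_iff] at hy ⊢
        intro h
        apply hy
        have h2 : (y:ℂ) * I = 1 * I := by rw [h, one_mul]
        have h3 : (y:ℂ) = 1 := mul_right_cancel₀ Complex.I_ne_zero h2
        exact_mod_cast h3
    apply hmap.frequently
    apply Filter.Eventually.frequently
    have hev : ∀ᶠ y in nhdsWithin (1:ℝ) {(1:ℝ)}ᶜ, 0 < y := by
      apply Filter.Eventually.filter_mono nhdsWithin_le_nhds
      exact eventually_gt_nhds one_pos
    filter_upwards [hev] with y hy
    exact hval y hy
  exact hana.eqOn_zero_of_preconnected_of_frequently_eq_zero hconn hI hfreq hz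

lemma quad {z : ℂ} (hz : z.im ≠ 0) :
    (cauchyT semicircle z)^2 - z * cauchyT semicircle z + 1 = 0 := by
  rcases hz.lt_or_gt with h | h
  · have hcz : 0 < ((starRingEnd ℂ) z).im := by simpa using h
    have hq := quad_pos hcz
    rw [cauchyT_conj] at hq
    have h2 := congrArg (starRingEnd ℂ) hq
    simp only [map_add, map_sub, map_pow, map_mul, map_one, map_zero,
      Complex.conj_conj] at h2
    exact h2
  · exact quad_pos h

lemma cauchyT_im_neg {z : ℂ} (hz : 0 < z.im) : (cauchyT semicircle z).im < 0 := by
  rcases lt_or_eq_of_le (cauchyT_im_nonpos hz) with h | h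
  · exact h
  · exfalso
    have h' : (cauchyT semicircle z).im = 0 := h
    have hq := quad_pos hz
    have him := congrArg Complex.im hq
    simp only [Complex.add_im, Complex.sub_im, Complex.mul_im, Complex.one_im,
      Complex.zero_im, pow_two, h', mul_zero, zero_mul, add_zero, zero_add, sub_zero,
      zero_sub, neg_eq_zero] at him
    have hre : (cauchyT semicircle z).re = 0 := by
      rcases mul_eq_zero.mp him with h1 | h1
      · linarith [hz, h1]
      · exact h1
    have hG0 : cauchyT semicircle z = 0 := Complex.ext hre h'
    rw [hG0] at hq
    simp at hq

section main
variable {α c : ℝ}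

lemma sol_quadratic (hα : α ∈ Set.Ioo (0:ℝ) 1) {z : ℂ} (hz : z.im ≠ 0)
    (he : z * cauchyT semicircle (z + (c:ℂ)) = ((1 - α : ℝ) : ℂ)) :
    (α:ℂ) * z^2 - (((1-α)*c : ℝ):ℂ) * z + (((1-α)^2 : ℝ):ℂ) = 0 := by
  have hz0 : z ≠ 0 := fun h => hz (by simp [h])
  have hzc : (z + (c:ℂ)).im ≠ 0 := by simpa using hz
  have hq := quad hzc
  have hG : cauchyT semicircle (z + (c:ℂ)) = ((1-α : ℝ):ℂ)/z := by
    rw [eq_div_iff hz0, mul_comm]; exact he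
  rw [hG] at hq
  have h2 : (α:ℂ) * z^2 - (((1-α)*c : ℝ):ℂ) * z + (((1-α)^2 : ℝ):ℂ)
      = z^2 * ((((1-α:ℝ):ℂ)/z)^2 - (z + (c:ℂ)) * (((1-α:ℝ):ℂ)/z) + 1) := by
    field_simp
    push_cast
    ring
  rw [h2, hq, mul_zero]

lemma root_analysis (hα : α ∈ Set.Ioo (0:ℝ) 1) {z : ℂ} (hz : z.im ≠ 0)
    (hq : (α:ℂ) * z^2 - (((1-α)*c : ℝ):ℂ) * z + (((1-α)^2 : ℝ):ℂ) = 0) :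
    z.re = (1-α)*c/(2*α) ∧ z.im^2 = (1-α)^2*(4*α - c^2)/(4*α^2) ∧ c^2 < 4*α := by
  have hα0 : α ≠ 0 := ne_of_gt hα.1
  have hre := congrArg Complex.re hq
  have him := congrArg Complex.im hq
  simp only [Complex.add_re, Complex.sub_re, Complex.mul_re, Complex.mul_im,
    Complex.add_im, Complex.sub_im, Complex.ofReal_re, Complex.ofReal_im,
    Complex.zero_re, Complex.zero_im, pow_two, zero_mul, mul_zero, sub_zero,
    zero_sub, zero_add, add_zero] at hre him
  have hfac : z.im * (2*α*z.re - (1-α)*c) = 0 := by linear_combination him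
  have hxre : z.re = (1-α)*c/(2*α) := by
    rcases mul_eq_zero.mp hfac with h1 | h1
    · exact absurd h1 hz
    · field_simp; linarith [h1]
  have him2 : z.im^2 = (1-α)^2*(4*α - c^2)/(4*α^2) := by
    rw [hxre] at hre
    field_simp at hre
    rw [eq_div_iff (by positivity : (4:ℝ)*α^2 ≠ 0)]
    have hne : (-(2*α^2) : ℝ) ≠ 0 :=
      neg_ne_zero.mpr (mul_ne_zero two_ne_zero (pow_ne_zero 2 hα0))
    apply mul_left_cancel₀ hne
    linear_combination (2*α^2) * hre
  refine ⟨hxre, him2, ?_⟩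
  have h1 : 0 < z.im^2 := by positivity
  rw [him2, lt_div_iff₀ (by positivity : (0:ℝ) < 4*α^2)] at h1
  nlinarith [h1, sq_nonneg (1-α)]

lemma sol_sufficient (hα : α ∈ Set.Ioo (0:ℝ) 1) {z : ℂ} (hz : 0 < z.im)
    (hq : (α:ℂ) * z^2 - (((1-α)*c : ℝ):ℂ) * z + (((1-α)^2 : ℝ):ℂ) = 0) :
    z * cauchyT semicircle (z + (c:ℂ)) = ((1 - α : ℝ) : ℂ) := by
  have hz0 : z ≠ 0 := fun h => (ne_of_gt hz) (by simp [h])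
  have hzc : 0 < (z + (c:ℂ)).im := by simpa using hz
  have hqG := quad (ne_of_gt hzc)
  have hGim := cauchyT_im_neg hzc
  have hg : (((1-α:ℝ):ℂ)/z)^2 - (z + (c:ℂ)) * (((1-α:ℝ):ℂ)/z) + 1 = 0 := by
    have h2 : (((1-α:ℝ):ℂ)/z)^2 - (z + (c:ℂ)) * (((1-α:ℝ):ℂ)/z) + 1
        = ((α:ℂ) * z^2 - (((1-α)*c : ℝ):ℂ) * z + (((1-α)^2 : ℝ):ℂ))/z^2 := by
      field_simp
      push_cast
      ring
    rw [h2, hq, zero_div]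
  have hfac : (cauchyT semicircle (z + (c:ℂ)) - ((1-α:ℝ):ℂ)/z)
      * (cauchyT semicircle (z + (c:ℂ)) + ((1-α:ℝ):ℂ)/z - (z + (c:ℂ))) = 0 := by
    linear_combination hqG - hg
  have hgim : (((1-α:ℝ):ℂ)/z).im < 0 := by
    have he : (((1-α:ℝ):ℂ)/z).im = (1-α) * (-z.im / Complex.normSq z) := by
      rw [div_eq_mul_inv, Complex.mul_im, Complex.ofReal_im, Complex.ofReal_re,
        Complex.inv_im]
      ring
    rw [he]
    have hn : 0 < Complex.normSq z := Complex.normSq_pos.mpr hz0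
    apply mul_neg_of_pos_of_neg (by linarith [hα.2])
    apply div_neg_of_neg_of_pos _ hn
    linarith [hz]
  rcases mul_eq_zero.mp hfac with h | h
  · have hG := sub_eq_zero.mp h
    rw [hG]
    field_simp
  · exfalso
    have hGeq : cauchyT semicircle (z + (c:ℂ)) = (z + (c:ℂ)) - ((1-α:ℝ):ℂ)/z := by
      linear_combination h
    have h2 := congrArg Complex.im hGeq
    simp only [Complex.sub_im, Complex.add_im, Complex.ofReal_im, add_zero] at h2
    linarith [hGim, hgim, hz, h2]

lemma conj_sol (hα : α ∈ Set.Ioo (0:ℝ) 1) {z : ℂ}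
    (he : z * cauchyT semicircle (z + (c:ℂ)) = ((1 - α : ℝ) : ℂ)) :
    (starRingEnd ℂ) z * cauchyT semicircle ((starRingEnd ℂ) z + (c:ℂ)) = ((1 - α : ℝ) : ℂ) := by
  have h1 : (starRingEnd ℂ) z + (c:ℂ) = (starRingEnd ℂ) (z + (c:ℂ)) := by
    rw [map_add, Complex.conj_ofReal]
  rw [h1, cauchyT_conj, ← map_mul, he, Complex.conj_ofReal]

lemma w_form (hα : α ∈ Set.Ioo (0:ℝ) 1) :
    ((((1 - α) * c : ℝ) : ℂ) + (((1 - α) * Real.sqrt (4 * α - c ^ 2) : ℝ) : ℂ) * Complex.I)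
        / (((2 * α : ℝ)) : ℂ)
      = (((1-α)*c/(2*α) : ℝ) : ℂ) + (((1-α)*Real.sqrt (4*α - c^2)/(2*α) : ℝ) : ℂ) * I := by
  have h2α : ((2*α : ℝ) : ℂ) ≠ 0 := by
    rw [Complex.ofReal_ne_zero]
    have := hα.1
    positivity
  rw [div_eq_iff h2α]
  push_cast
  have hα0 : (α:ℂ) ≠ 0 := by
    rw [Complex.ofReal_ne_zero]; exact ne_of_gt hα.1
  field_simp

end main

noncomputable def wexp (α c : ℝ) : ℂ :=
  ((((1 - α) * c : ℝ) : ℂ) + (((1 - α) * Real.sqrt (4 * α - c ^ 2) : ℝ) : ℂ) * Complex.I)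
    / (((2 * α : ℝ)) : ℂ)

section wprops
variable {α c : ℝ}

lemma wexp_eq (hα : α ∈ Set.Ioo (0:ℝ) 1) :
    wexp α c = (((1-α)*c/(2*α) : ℝ) : ℂ)
      + (((1-α)*Real.sqrt (4*α - c^2)/(2*α) : ℝ) : ℂ) * I := w_form hα

lemma wexp_re (hα : α ∈ Set.Ioo (0:ℝ) 1) : (wexp α c).re = (1-α)*c/(2*α) := by
  rw [wexp_eq hα]
  simp only [Complex.add_re, Complex.mul_I_re, Complex.ofReal_re, Complex.ofReal_im,
    neg_zero, add_zero]

lemma wexp_im (hα : α ∈ Set.Ioo (0:ℝ) 1) :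
    (wexp α c).im = (1-α)*Real.sqrt (4*α - c^2)/(2*α) := by
  rw [wexp_eq hα]
  simp only [Complex.add_im, Complex.mul_I_im, Complex.ofReal_re, Complex.ofReal_im,
    zero_add]

lemma wexp_im_pos (hα : α ∈ Set.Ioo (0:ℝ) 1) (hc2 : c^2 < 4*α) : 0 < (wexp α c).im := by
  rw [wexp_im hα]
  have h1 : 0 < 1 - α := by linarith [hα.2]
  have h2 : 0 < Real.sqrt (4*α - c^2) := Real.sqrt_pos.mpr (by linarith)
  have h3 : 0 < 2*α := by linarith [hα.1]
  positivity

lemma wexp_quad (hα : α ∈ Set.Ioo (0:ℝ) 1) (hc2 : c^2 < 4*α) :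
    (α:ℂ) * (wexp α c)^2 - (((1-α)*c : ℝ):ℂ) * (wexp α c) + (((1-α)^2 : ℝ):ℂ) = 0 := by
  rw [wexp_eq hα]
  have hα0 : (α:ℝ) ≠ 0 := ne_of_gt hα.1
  obtain ⟨S, hS, hs⟩ : ∃ S : ℝ, Real.sqrt (4*α-c^2) = S ∧ S^2 = 4*α - c^2 :=
    ⟨_, rfl, Real.sq_sqrt (by linarith)⟩
  rw [hS]
  rw [Complex.ext_iff]
  constructor
  · simp only [Complex.add_re, Complex.sub_re, Complex.mul_re, Complex.mul_im,
      Complex.add_im, Complex.sub_im, Complex.ofReal_re, Complex.ofReal_im,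
      Complex.I_re, Complex.I_im, Complex.zero_re, Complex.zero_im, pow_two,
      zero_mul, mul_zero, sub_zero, zero_sub, zero_add, add_zero, mul_one, one_mul]
    field_simp
    first
    | linear_combination (-(1-α)^2) * hs
    | linear_combination ((1-α)^2 * 2 * α) * hs
    | linear_combination (2*α^2*(1-α)^2) * hs
    | linear_combination (-(2*α*(α-1)^2*(α+1))) * hs
    | ring
  · simp only [Complex.add_re, Complex.sub_re, Complex.mul_re, Complex.mul_im,
      Complex.add_im, Complex.sub_im, Complex.ofReal_re, Complex.ofReal_im,
      Complex.I_re, Complex.I_im, Complex.zero_re, Complex.zero_im, pow_two,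
      zero_mul, mul_zero, sub_zero, zero_sub, zero_add, add_zero, mul_one, one_mul]
    field_simp
    ring

lemma wexp_sol (hα : α ∈ Set.Ioo (0:ℝ) 1) (hc2 : c^2 < 4*α) :
    wexp α c * cauchyT semicircle (wexp α c + (c:ℂ)) = ((1 - α : ℝ) : ℂ) :=
  sol_sufficient hα (wexp_im_pos hα hc2) (wexp_quad hα hc2)

lemma wexp_set (hα : α ∈ Set.Ioo (0:ℝ) 1) (hc2 : c^2 < 4*α) :
    {z : ℂ | z.im ≠ 0 ∧ z * cauchyT semicircle (z + (c:ℂ)) = ((1 - α : ℝ) : ℂ)}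
      = {wexp α c, (starRingEnd ℂ) (wexp α c)} := by
  have h1α : (0:ℝ) < 1 - α := by linarith [hα.2]
  have hα0 : (α:ℝ) ≠ 0 := ne_of_gt hα.1
  have hs : Real.sqrt (4*α-c^2)^2 = 4*α - c^2 := Real.sq_sqrt (by linarith)
  have hvsq : ((1-α)*Real.sqrt (4*α-c^2)/(2*α))^2 = (1-α)^2*(4*α-c^2)/(4*α^2) := by
    rw [div_pow, mul_pow, hs]
    congr 1
    ring
  ext z
  simp only [Set.mem_setOf_eq, Set.mem_insert_iff, Set.mem_singleton_iff]
  constructor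
  · rintro ⟨hzim, he⟩
    obtain ⟨h1, h2, _⟩ := root_analysis hα hzim (sol_quadratic hα hzim he)
    have h2' : z.im^2 = ((1-α)*Real.sqrt (4*α-c^2)/(2*α))^2 := by rw [h2, hvsq]
    have hfac : (z.im - (1-α)*Real.sqrt (4*α-c^2)/(2*α))
        * (z.im + (1-α)*Real.sqrt (4*α-c^2)/(2*α)) = 0 := by linear_combination h2'
    rcases mul_eq_zero.mp hfac with h | h
    · left
      exact Complex.ext (h1.trans (wexp_re hα).symm)
        ((sub_eq_zero.mp h).trans (wexp_im hα).symm)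
    · right
      refine Complex.ext ?_ ?_
      · rw [Complex.conj_re, wexp_re hα]; exact h1
      · rw [Complex.conj_im, wexp_im hα]; linarith [h]
  · rintro (rfl | rfl)
    · exact ⟨ne_of_gt (wexp_im_pos hα hc2), wexp_sol hα hc2⟩
    · refine ⟨?_, conj_sol hα (wexp_sol hα hc2)⟩
      rw [Complex.conj_im]
      exact neg_ne_zero.mpr (ne_of_gt (wexp_im_pos hα hc2))

lemma wexp_id1 (hα : α ∈ Set.Ioo (0:ℝ) 1) (hc2 : c^2 < 4*α) :
    -((1 - α) / Real.pi) * ((wexp α c)⁻¹).im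
      = 1/(2*Real.pi) * Real.sqrt (4*α - c^2) := by
  have h1α : (0:ℝ) < 1 - α := by linarith [hα.2]
  have hα0 : (α:ℝ) ≠ 0 := ne_of_gt hα.1
  have hs : Real.sqrt (4*α-c^2)^2 = 4*α - c^2 := Real.sq_sqrt (by linarith)
  have hs0 : 0 < Real.sqrt (4*α-c^2) := Real.sqrt_pos.mpr (by linarith)
  have hπ : Real.pi ≠ 0 := Real.pi_ne_zero
  have hw0 : wexp α c ≠ 0 := by
    intro h
    have := wexp_im_pos hα hc2
    rw [h] at this
    simp at this
  rw [Complex.inv_im, Complex.normSq_apply, wexp_re hα, wexp_im hα]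
  have hnsq : (1-α)*c/(2*α) * ((1-α)*c/(2*α))
      + (1-α)*Real.sqrt (4*α-c^2)/(2*α) * ((1-α)*Real.sqrt (4*α-c^2)/(2*α))
      = (1-α)^2/α := by
    field_simp
    first
    | linear_combination (α*(1-α)^2) * hs
    | linear_combination ((1-α)^2) * hs
    | linear_combination (-(α*(1-α)^2)) * hs
    | (rw [show α*4 - c^2 = 4*α - c^2 by ring, hs]; ring)
  rw [hnsq]
  field_simp

lemma wexp_id2 (hα : α ∈ Set.Ioo (0:ℝ) 1) (hc2 : c^2 < 4*α) :
    1/(2*Real.pi) * Real.sqrt (4*α - c^2) = Real.sqrt α * rhoSC (c/Real.sqrt α) := by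
  rw [rhoSC_eq]
  have hα0 : (α:ℝ) ≠ 0 := ne_of_gt hα.1
  have hsa : Real.sqrt α ≠ 0 := by
    rw [Real.sqrt_ne_zero' ]; exact hα.1
  have harg : α * (4 - (c/Real.sqrt α)^2) = 4*α - c^2 := by
    rw [div_pow, Real.sq_sqrt hα.1.le]
    field_simp
  rw [show Real.sqrt α * (Real.sqrt (4 - (c/Real.sqrt α)^2) / (2*Real.pi))
      = Real.sqrt α * Real.sqrt (4 - (c/Real.sqrt α)^2) / (2*Real.pi) by ring,
    ← Real.sqrt_mul hα.1.le, harg]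
  ring

end wprops

lemma ioo_iff_sq (hα : α ∈ Set.Ioo (0:ℝ) 1) (x : ℝ) :
    x ∈ Set.Ioo (-(2 * Real.sqrt α)) (2 * Real.sqrt α) ↔ x^2 < 4*α := by
  have h1 : Real.sqrt α ^ 2 = α := Real.sq_sqrt hα.1.le
  have h2 : 0 < Real.sqrt α := Real.sqrt_pos.mpr hα.1
  constructor
  · rintro ⟨ha, hb⟩
    nlinarith [ha, hb, h1, h2]
  · intro h
    constructor <;> nlinarith [h, h1, h2]

theorem stmt7 (α : ℝ) (hα : α ∈ Set.Ioo (0 : ℝ) 1) :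
    {c : ℝ | ∃ w : ℂ, w.im ≠ 0 ∧ w * cauchyT semicircle (w + c) = ((1 - α : ℝ) : ℂ)}
      = Set.Ioo (-(2 * Real.sqrt α)) (2 * Real.sqrt α) ∧
    ∀ c ∈ Set.Ioo (-(2 * Real.sqrt α)) (2 * Real.sqrt α),
      let w : ℂ := ((((1 - α) * c : ℝ) : ℂ) +
          (((1 - α) * Real.sqrt (4 * α - c ^ 2) : ℝ) : ℂ) * Complex.I) / (((2 * α : ℝ)) : ℂ)
      0 < w.im ∧
      {z : ℂ | z.im ≠ 0 ∧ z * cauchyT semicircle (z + c) = ((1 - α : ℝ) : ℂ)}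
        = {w, (starRingEnd ℂ) w} ∧
      -((1 - α) / Real.pi) * (w⁻¹).im = (1 / (2 * Real.pi)) * Real.sqrt (4 * α - c ^ 2) ∧
      (1 / (2 * Real.pi)) * Real.sqrt (4 * α - c ^ 2)
        = Real.sqrt α * rhoSC (c / Real.sqrt α) := by
  constructor
  · ext c
    simp only [Set.mem_setOf_eq]
    rw [ioo_iff_sq hα]
    constructor
    · rintro ⟨z, hzim, he⟩
      exact (root_analysis hα hzim (sol_quadratic hα hzim he)).2.2
    · intro hc2
      exact ⟨wexp α c, ne_of_gt (wexp_im_pos hα hc2), wexp_sol hα hc2⟩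
  · intro c hc
    have hc2 : c^2 < 4*α := (ioo_iff_sq hα c).mp hc
    exact ⟨wexp_im_pos hα hc2, wexp_set hα hc2, wexp_id1 hα hc2, wexp_id2 hα hc2⟩
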